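/- Let a, b, c be real numbers. For every n ∈ ℕ, the monic polynomial matrix Pₙ := Aₙ⁻¹·Qₙ satisfies Pₙ'' + Pₙ'·F₁ + Pₙ·F₀ = Λₙ(D₁)·Pₙ as matrices of polynomials, where Λₙ(D₁) = [[-2n, -2abn, 0],[0, -2n+2, 0],[0, 0, -2n]]; that is, the monic orthogonal polynomials are eigenfunctions of D₁ with eigenvalue Λₙ(D₁). -/
import Mathlib


open Matrix Polynomial

/-- The monic Hermite polynomials for the weight e^{-x²}:
h₀ = 1, h_{n+1}(x) = x·hₙ(x) - (1/2)·hₙ'(x). -/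
noncomputable def h : ℕ → Polynomial ℝ
  | 0 => 1
  | n + 1 => X * h n - C (1 / 2 : ℝ) * derivative (h n)

lemma h_succ (n : ℕ) : h (n+1) = X * h n - C (1/2:ℝ) * derivative (h n) := rfl

lemma Chalf : (C (1/2:ℝ) : ℝ[X]) * 2 = 1 := by
  rw [show (2:ℝ[X]) = C 2 from (map_ofNat C 2).symm, ← C_mul]
  norm_num

lemma hd : ∀ n : ℕ, derivative (h (n+1)) = C ((n:ℝ)+1) * h n := by
  intro n
  induction n with
  | zero => simp [h_succ, h]
  | succ m ih =>
      rw [h_succ, ih]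
      simp only [derivative_sub, derivative_mul, derivative_X, derivative_C, one_mul,
        zero_mul, ih]
      rw [h_succ]
      push_cast
      simp only [C_add, C_1]
      ring

lemma hdn (n : ℕ) : derivative (h n) = C (n:ℝ) * h (n-1) := by
  cases n with
  | zero => simp [h]
  | succ m => rw [hd m]; push_cast; simp

lemma he (n : ℕ) : derivative (derivative (h n))
    = 2 * X * derivative (h n) - C (2*(n:ℝ)) * h n := by
  cases n with
  | zero => simp [h]
  | succ m =>
      rw [hd m, derivative_mul, derivative_C, zero_mul, zero_add, h_succ]
      push_cast
      simp only [C_add, C_1, C_mul, map_ofNat]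
      linear_combination (-1 : ℝ[X]) * (C (m:ℝ) * derivative (h m) + derivative (h m)) * Chalf

lemma dcomp (b : ℝ) (p : ℝ[X]) :
    derivative (p.comp (X - C b)) = (derivative p).comp (X - C b) := by
  rw [derivative_comp]; simp

lemma heb (b : ℝ) (n : ℕ) : derivative (derivative ((h n).comp (X - C b)))
    = 2 * (X - C b) * derivative ((h n).comp (X - C b))
      - C (2*(n:ℝ)) * (h n).comp (X - C b) := by
  rw [dcomp, dcomp, he]
  simp only [sub_comp, mul_comp, X_comp, C_comp, ofNat_comp]
  ring



/-- The sequence Qₙ of matrix orthogonal polynomials for W. -/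
noncomputable def Qmat (a b c : ℝ) (n : ℕ) : Matrix (Fin 3) (Fin 3) (Polynomial ℝ) :=
  !![(h n).comp (X - C b),
     C a * (h (n + 1) - (h n).comp (X - C b) * X),
     0;
     -(C (a * Real.exp (-b ^ 2) * n / 2)) * (h (n - 1)).comp (X - C b),
     C (a ^ 2 * Real.exp (-b ^ 2) * n / 2) * (h (n - 1)).comp (X - C b) * X
       + h n + C (c ^ 2 * n / 2) * h (n - 1) * X,
     -(C (c * n / 2)) * h (n - 1);
     0,
     C c * (h (n + 1) - h n * X),
     h n]

/-- The leading coefficient Aₙ of Qₙ. -/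
noncomputable def Amat (a b c : ℝ) (n : ℕ) : Matrix (Fin 3) (Fin 3) ℝ :=
  !![1, a * b * n, 0;
     0, a ^ 2 * Real.exp (-b ^ 2) * n / 2 + 1 + c ^ 2 * n / 2, 0;
     0, 0, 1]

/-- First-order (polynomial) coefficient of the operator D₁. -/
noncomputable def F1p (a b c : ℝ) : Matrix (Fin 3) (Fin 3) (Polynomial ℝ) :=
  !![C (2 * b) - 2 * X, C (-2 * a * b) * X + C (2 * a), 0;
     0, -2 * X, 0;
     0, C (2 * c), -2 * X]

/-- Zeroth-order coefficient of the operator D₁. -/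
noncomputable def F0p : Matrix (Fin 3) (Fin 3) (Polynomial ℝ) :=
  !![0, 0, 0; 0, 2, 0; 0, 0, 0]

/-- Eigenvalue matrix Λₙ(D₁). -/
noncomputable def Lambda1 (a b : ℝ) (n : ℕ) : Matrix (Fin 3) (Fin 3) ℝ :=
  !![-2 * (n : ℝ), -2 * a * b * (n : ℝ), 0;
     0, -2 * (n : ℝ) + 2, 0;
     0, 0, -2 * (n : ℝ)]

noncomputable def LamQ (n : ℕ) : Matrix (Fin 3) (Fin 3) ℝ :=
  !![-2 * (n : ℝ), 0, 0; 0, -2 * (n : ℝ) + 2, 0; 0, 0, -2 * (n : ℝ)]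

set_option maxHeartbeats 1000000 in
lemma Qeigen (a b c : ℝ) (n : ℕ) :
    (Qmat a b c n).map (fun p => derivative (derivative p))
      + (Qmat a b c n).map (fun p => derivative p) * F1p a b c
      + Qmat a b c n * F0p
    = (LamQ n).map C * Qmat a b c n := by
  rcases n with _ | m
  · have h1 : h 1 = X := by simp [h]
    have h0 : h 0 = 1 := rfl
    ext i j
    fin_cases i <;> fin_cases j <;>
      simp [Qmat, F1p, F0p, LamQ, Matrix.mul_apply, Fin.sum_univ_three, h0, h1,
        map_ofNat, one_comp, Matrix.vecHead, Matrix.vecTail]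
  · have Eu := he (m+1)
    have Ew := he (m+2)
    have Ev := he m
    have Eg := heb b (m+1)
    have Eg1 := heb b m
    push_cast at Eu Ew Ev Eg Eg1
    rw [← Matrix.ext_iff]
    intro i j
    fin_cases i <;> fin_cases j
    · simp [Qmat, F1p, F0p, LamQ, Matrix.mul_apply, Fin.sum_univ_three,
        Matrix.map_apply, Matrix.add_apply, Nat.add_sub_cancel, Matrix.of_apply,
        derivative_mul, derivative_add, derivative_sub, derivative_neg, derivative_C,
        derivative_X, derivative_ofNat, Matrix.vecHead, Matrix.vecTail]
      push_cast
      linear_combination (norm := (push_cast; simp only [div_eq_mul_inv, one_div, C_mul, C_add, C_neg, C_sub, C_1, C_0, map_ofNat, map_pow, map_natCast]; ring1)) Eg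
    · simp [Qmat, F1p, F0p, LamQ, Matrix.mul_apply, Fin.sum_univ_three,
        Matrix.map_apply, Matrix.add_apply, Nat.add_sub_cancel, Matrix.of_apply,
        derivative_mul, derivative_add, derivative_sub, derivative_neg, derivative_C,
        derivative_X, derivative_ofNat, Matrix.vecHead, Matrix.vecTail]
      push_cast
      linear_combination (norm := (push_cast; simp only [div_eq_mul_inv, one_div, C_mul, C_add, C_neg, C_sub, C_1, C_0, map_ofNat, map_pow, map_natCast]; ring1)) (C a) * Ew - (C a * X) * Eg
    · simp [Qmat, F1p, F0p, LamQ, Matrix.mul_apply, Fin.sum_univ_three,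
        Matrix.map_apply, Matrix.add_apply, Nat.add_sub_cancel, Matrix.of_apply,
        derivative_mul, derivative_add, derivative_sub, derivative_neg, derivative_C,
        derivative_X, derivative_ofNat, Matrix.vecHead, Matrix.vecTail]
    · simp [Qmat, F1p, F0p, LamQ, Matrix.mul_apply, Fin.sum_univ_three,
        Matrix.map_apply, Matrix.add_apply, Nat.add_sub_cancel, Matrix.of_apply,
        derivative_mul, derivative_add, derivative_sub, derivative_neg, derivative_C,
        derivative_X, derivative_ofNat, Matrix.vecHead, Matrix.vecTail]
      push_cast
      linear_combination (norm := (push_cast; simp only [div_eq_mul_inv, one_div, C_mul, C_add, C_neg, C_sub, C_1, C_0, map_ofNat, map_pow, map_natCast]; ring1)) (-(C (a * Real.exp (-b ^ 2) * ((m:ℝ)+1) / 2))) * Eg1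
    · simp [Qmat, F1p, F0p, LamQ, Matrix.mul_apply, Fin.sum_univ_three,
        Matrix.map_apply, Matrix.add_apply, Nat.add_sub_cancel, Matrix.of_apply,
        derivative_mul, derivative_add, derivative_sub, derivative_neg, derivative_C,
        derivative_X, derivative_ofNat, Matrix.vecHead, Matrix.vecTail]
      push_cast
      linear_combination (norm := (push_cast; simp only [div_eq_mul_inv, one_div, C_mul, C_add, C_neg, C_sub, C_1, C_0, map_ofNat, map_pow, map_natCast]; ring1)) Eu + (C (c^2*((m:ℝ)+1)/2) * X) * Ev + (C (a^2*Real.exp (-b^2)*((m:ℝ)+1)/2) * X) * Eg1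
    · simp [Qmat, F1p, F0p, LamQ, Matrix.mul_apply, Fin.sum_univ_three,
        Matrix.map_apply, Matrix.add_apply, Nat.add_sub_cancel, Matrix.of_apply,
        derivative_mul, derivative_add, derivative_sub, derivative_neg, derivative_C,
        derivative_X, derivative_ofNat, Matrix.vecHead, Matrix.vecTail]
      push_cast
      linear_combination (norm := (push_cast; simp only [div_eq_mul_inv, one_div, C_mul, C_add, C_neg, C_sub, C_1, C_0, map_ofNat, map_pow, map_natCast]; ring1)) (-(C (c*((m:ℝ)+1)/2))) * Ev
    · simp [Qmat, F1p, F0p, LamQ, Matrix.mul_apply, Fin.sum_univ_three,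
        Matrix.map_apply, Matrix.add_apply, Nat.add_sub_cancel, Matrix.of_apply,
        derivative_mul, derivative_add, derivative_sub, derivative_neg, derivative_C,
        derivative_X, derivative_ofNat, Matrix.vecHead, Matrix.vecTail]
    · simp [Qmat, F1p, F0p, LamQ, Matrix.mul_apply, Fin.sum_univ_three,
        Matrix.map_apply, Matrix.add_apply, Nat.add_sub_cancel, Matrix.of_apply,
        derivative_mul, derivative_add, derivative_sub, derivative_neg, derivative_C,
        derivative_X, derivative_ofNat, Matrix.vecHead, Matrix.vecTail]
      push_cast
      linear_combination (norm := (push_cast; simp only [div_eq_mul_inv, one_div, C_mul, C_add, C_neg, C_sub, C_1, C_0, map_ofNat, map_pow, map_natCast]; ring1)) (C c) * Ew - (C c * X) * Eu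
    · simp [Qmat, F1p, F0p, LamQ, Matrix.mul_apply, Fin.sum_univ_three,
        Matrix.map_apply, Matrix.add_apply, Nat.add_sub_cancel, Matrix.of_apply,
        derivative_mul, derivative_add, derivative_sub, derivative_neg, derivative_C,
        derivative_X, derivative_ofNat, Matrix.vecHead, Matrix.vecTail]
      push_cast
      linear_combination (norm := (push_cast; simp only [div_eq_mul_inv, one_div, C_mul, C_add, C_neg, C_sub, C_1, C_0, map_ofNat, map_pow, map_natCast]; ring1)) Eu


lemma map_deriv_constmul (N : Matrix (Fin 3) (Fin 3) ℝ) (Q : Matrix (Fin 3) (Fin 3) (Polynomial ℝ)) :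
    (N.map C * Q).map (fun p => derivative p) = N.map C * Q.map (fun p => derivative p) := by
  ext i j
  simp [Matrix.mul_apply, Matrix.map_apply, Fin.sum_univ_three, derivative_add]

lemma map_dderiv_constmul (N : Matrix (Fin 3) (Fin 3) ℝ) (Q : Matrix (Fin 3) (Fin 3) (Polynomial ℝ)) :
    (N.map C * Q).map (fun p => derivative (derivative p))
      = N.map C * Q.map (fun p => derivative (derivative p)) := by
  ext i j
  simp [Matrix.mul_apply, Matrix.map_apply, Fin.sum_univ_three, derivative_add]


/-- the monic orthogonal polynomials Pₙ = Aₙ⁻¹·Qₙ are eigenfunctions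
of D₁: Pₙ'' + Pₙ'·F₁ + Pₙ·F₀ = Λₙ(D₁)·Pₙ. -/
theorem monic_eigenfunctions_D1 (a b c : ℝ) (n : ℕ) :
    (((Amat a b c n).map C)⁻¹ * Qmat a b c n).map (fun p => derivative (derivative p))
      + (((Amat a b c n).map C)⁻¹ * Qmat a b c n).map (fun p => derivative p) * F1p a b c
      + (((Amat a b c n).map C)⁻¹ * Qmat a b c n) * F0p
    = (Lambda1 a b n).map C * (((Amat a b c n).map C)⁻¹ * Qmat a b c n) := by
  have hs0 : (a ^ 2 * Real.exp (-b ^ 2) * n / 2 + 1 + c ^ 2 * n / 2) ≠ 0 := by positivity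
  set Bm : Matrix (Fin 3) (Fin 3) ℝ :=
    !![1, -(a*b*n)/(a ^ 2 * Real.exp (-b ^ 2) * n / 2 + 1 + c ^ 2 * n / 2), 0;
       0, 1/(a ^ 2 * Real.exp (-b ^ 2) * n / 2 + 1 + c ^ 2 * n / 2), 0;
       0, 0, 1] with hBm
  have hAB : Amat a b c n * Bm = 1 := by
    rw [← Matrix.ext_iff]
    intro i j
    fin_cases i <;> fin_cases j <;>
      simp [Amat, hBm, Matrix.mul_apply, Fin.sum_univ_three, Matrix.one_apply,
        Matrix.vecHead, Matrix.vecTail] <;>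
      (try field_simp) <;> (try ring)
  have hInv : ((Amat a b c n).map C)⁻¹ = Bm.map C := by
    apply Matrix.inv_eq_right_inv
    rw [← Matrix.map_mul, hAB]
    exact Matrix.map_one _ (map_zero C) (map_one C)
  have hcomm' : Lambda1 a b n * Bm = Bm * LamQ n := by
    rw [← Matrix.ext_iff]
    intro i j
    fin_cases i <;> fin_cases j <;>
      simp [Lambda1, LamQ, hBm, Matrix.mul_apply, Fin.sum_univ_three,
        Matrix.vecHead, Matrix.vecTail] <;>
      (try field_simp) <;> (try ring)
  have hcomm : (Lambda1 a b n).map C * Bm.map C = Bm.map C * (LamQ n).map C := by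
    rw [← Matrix.map_mul, ← Matrix.map_mul, hcomm']
  rw [hInv, map_dderiv_constmul, map_deriv_constmul,
    Matrix.mul_assoc, Matrix.mul_assoc, ← Matrix.mul_add, ← Matrix.mul_add,
    Qeigen a b c n, ← Matrix.mul_assoc, ← hcomm, Matrix.mul_assoc]
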